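/- The full subcategory S5dlubpo of Dlubpo consisting of all dlubpos satisfying axiom S5 for directed sets is cartesian closed, with terminal object the one-point dlubpo, products D × E with componentwise structure, and exponents the general function dlubpos D ⇒* E. -/

import Mathlib

universe u

/-- A set is directed: non-empty and upward directed. -/
def Dir {α : Type u} [Preorder α] (A : Set α) : Prop :=
  A.Nonempty ∧ DirectedOn (· ≤ ·) A

/-- The data of a directed-lub partial order: a partial order together with a
convergence relation designating natural lubs of (directed) subsets. -/
structure PreDlubpo : Type (u + 1) where
  carrier : Type u
  [po : PartialOrder carrier]
  conv : Set carrier → carrier → Prop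

attribute [instance] PreDlubpo.po

/-- The dlubpo axioms: natural sets are directed with the designated element as
lub, and the singleton axiom S3 holds. -/
def IsDlubpo (D : PreDlubpo.{u}) : Prop :=
  (∀ (A : Set D.carrier) (a : D.carrier), D.conv A a → Dir A ∧ IsLUB A a) ∧
  ∀ a : D.carrier, D.conv {a} a

/-- Axiom S5 for directed sets. -/
def S5ax (D : PreDlubpo.{u}) : Prop :=
  ∀ (X Y : Set D.carrier) (y : D.carrier), X ⊆ Y → Dir X → Dir Y → D.conv Y y →
    (∀ b ∈ Y, ∃ a ∈ X, b ≤ a) → D.conv X y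

/-- Continuous functions between dlubpos. -/
def Hom (D E : PreDlubpo.{u}) (f : D.carrier → E.carrier) : Prop :=
  Monotone f ∧ ∀ (A : Set D.carrier) (a : D.carrier), D.conv A a → E.conv (f '' A) (f a)

/-- The one-point dlubpo. -/
def termD : PreDlubpo.{u} where
  carrier := PUnit
  conv A a := A = {a}

/-- The product dlubpo, with componentwise order and convergence. -/
def prodD (D E : PreDlubpo.{u}) : PreDlubpo.{u} where
  carrier := D.carrier × E.carrier
  conv A p := Dir A ∧ D.conv (Prod.fst '' A) p.1 ∧ E.conv (Prod.snd '' A) p.2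

/-- The general function dlubpo `D ⇒* E`: continuous functions with pointwise
order; `F → f` iff `F` is directed and for all directed `A` with `π₁[A] = F`
and `π₂[A] → d`, `eval[A] → f d`. -/
def expoD (D E : PreDlubpo.{u}) : PreDlubpo.{u} where
  carrier := {f : D.carrier → E.carrier // Hom D E f}
  conv F f := Dir F ∧
    ∀ A : Set ({f : D.carrier → E.carrier // Hom D E f} × D.carrier),
      Dir A → Prod.fst '' A = F →
      ∀ d : D.carrier, D.conv (Prod.snd '' A) d →
        E.conv ((fun p => p.1.1 p.2) '' A) (f.1 d)

section Aux

variable {α β : Type u} [Preorder α] [Preorder β]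

lemma Dir.singleton (a : α) : Dir ({a} : Set α) :=
  ⟨⟨a, rfl⟩, directedOn_singleton a⟩

lemma Dir.image {A : Set α} (hA : Dir A) (f : α → β) (hf : Monotone f) :
    Dir (f '' A) := by
  refine ⟨hA.1.image f, ?_⟩
  rintro _ ⟨a, ha, rfl⟩ _ ⟨b, hb, rfl⟩
  obtain ⟨c, hc, hac, hbc⟩ := hA.2 a ha b hb
  exact ⟨f c, ⟨c, hc, rfl⟩, hf hac, hf hbc⟩

lemma Dir.prod {A : Set α} {B : Set β} (hA : Dir A) (hB : Dir B) :
    Dir (A ×ˢ B) := by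
  obtain ⟨a0, ha0⟩ := hA.1; obtain ⟨b0, hb0⟩ := hB.1
  refine ⟨⟨(a0, b0), ⟨ha0, hb0⟩⟩, ?_⟩
  rintro ⟨a1, b1⟩ ⟨ha1, hb1⟩ ⟨a2, b2⟩ ⟨ha2, hb2⟩
  obtain ⟨a3, ha3, h13, h23⟩ := hA.2 a1 ha1 a2 ha2
  obtain ⟨b3, hb3, k13, k23⟩ := hB.2 b1 hb1 b2 hb2
  exact ⟨(a3, b3), ⟨ha3, hb3⟩, ⟨h13, k13⟩, ⟨h23, k23⟩⟩

end Aux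

lemma expo_le_iff {D E : PreDlubpo.{u}} {g h : (expoD D E).carrier} :
    g ≤ h ↔ ∀ x, g.1 x ≤ h.1 x := Iff.rfl

lemma eval_monotone (D E : PreDlubpo.{u}) :
    Monotone (fun p : (prodD (expoD D E) D).carrier => p.1.1 p.2) := by
  rintro ⟨g, x⟩ ⟨h, y⟩ ⟨h1, h2⟩
  exact le_trans (h1 x) (h.2.1 h2)

lemma term_part : IsDlubpo termD.{u} ∧ S5ax termD.{u} ∧
    ∀ C : PreDlubpo.{u}, IsDlubpo C → S5ax C →
      ∃! f : C.carrier → termD.{u}.carrier, Hom C termD f := by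
  refine ⟨⟨?_, ?_⟩, ?_, ?_⟩
  · intro A a hA
    have hA' : A = {a} := hA
    subst hA'
    exact ⟨Dir.singleton a, isLUB_singleton⟩
  · intro a; rfl
  · intro X Y y hXY hX hY hconv _
    have hY' : Y = {y} := hconv
    subst hY'
    show X = {y}
    exact Set.eq_singleton_iff_nonempty_unique_mem.2 ⟨hX.1, fun z hz => hXY hz⟩
  · intro C hC _
    refine ⟨fun _ => PUnit.unit, ⟨fun _ _ _ => le_refl _, ?_⟩, ?_⟩
    · intro A a hA
      have hne : A.Nonempty := (hC.1 A a hA).1.1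
      show _ = _
      ext x
      simp only [Set.mem_singleton_iff]
      constructor
      · intro _; exact @Subsingleton.elim PUnit _ _ _
      · rintro rfl
        exact ⟨hne.choose, hne.choose_spec, rfl⟩
    · intro g _
      funext c
      exact @Subsingleton.elim PUnit _ _ _

lemma prod_part (D E : PreDlubpo.{u}) (hD : IsDlubpo D) (sD : S5ax D)
    (hE : IsDlubpo E) (sE : S5ax E) :
    IsDlubpo (prodD D E) ∧ S5ax (prodD D E) ∧
      Hom (prodD D E) D Prod.fst ∧ Hom (prodD D E) E Prod.snd ∧
      ∀ C : PreDlubpo.{u}, IsDlubpo C → S5ax C →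
        ∀ (f : C.carrier → D.carrier) (g : C.carrier → E.carrier),
          Hom C D f → Hom C E g →
          ∃! h : C.carrier → (prodD D E).carrier,
            Hom C (prodD D E) h ∧ Prod.fst ∘ h = f ∧ Prod.snd ∘ h = g := by
  refine ⟨⟨?_, ?_⟩, ?_, ⟨fun _ _ hab => hab.1, fun A p hp => hp.2.1⟩,
    ⟨fun _ _ hab => hab.2, fun A p hp => hp.2.2⟩, ?_⟩
  · rintro A p ⟨hdir, h1, h2⟩
    refine ⟨hdir, ?_, ?_⟩
    · intro q hq
      exact ⟨(hD.1 _ _ h1).2.1 ⟨q, hq, rfl⟩, (hE.1 _ _ h2).2.1 ⟨q, hq, rfl⟩⟩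
    · intro q hq
      refine ⟨(hD.1 _ _ h1).2.2 ?_, (hE.1 _ _ h2).2.2 ?_⟩
      · rintro _ ⟨r, hr, rfl⟩; exact (hq hr).1
      · rintro _ ⟨r, hr, rfl⟩; exact (hq hr).2
  · intro p
    refine ⟨Dir.singleton p, ?_, ?_⟩
    · show D.conv (Prod.fst '' ({p} : Set (D.carrier × E.carrier))) p.1
      convert hD.2 p.1 using 2; exact Set.image_singleton
    · show E.conv (Prod.snd '' ({p} : Set (D.carrier × E.carrier))) p.2
      convert hE.2 p.2 using 2; exact Set.image_singleton
  · rintro X Y y hXY hX hY ⟨hdirY, h1, h2⟩ hcof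
    refine ⟨hX, ?_, ?_⟩
    · refine sD (Prod.fst '' X) (Prod.fst '' Y) y.1 (Set.image_mono hXY)
        (hX.image _ (fun _ _ hab => hab.1)) (hY.image _ (fun _ _ hab => hab.1)) h1 ?_
      rintro _ ⟨b, hb, rfl⟩
      obtain ⟨a, haX, hba⟩ := hcof b hb
      exact ⟨a.1, ⟨a, haX, rfl⟩, hba.1⟩
    · refine sE (Prod.snd '' X) (Prod.snd '' Y) y.2 (Set.image_mono hXY)
        (hX.image _ (fun _ _ hab => hab.2)) (hY.image _ (fun _ _ hab => hab.2)) h2 ?_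
      rintro _ ⟨b, hb, rfl⟩
      obtain ⟨a, haX, hba⟩ := hcof b hb
      exact ⟨a.2, ⟨a, haX, rfl⟩, hba.2⟩
  · intro C hC _ f g hf hg
    refine ⟨fun c => (f c, g c), ⟨⟨fun _ _ hab => ⟨hf.1 hab, hg.1 hab⟩, ?_⟩, rfl, rfl⟩, ?_⟩
    · intro A a hA
      refine ⟨((hC.1 A a hA).1).image _ (fun _ _ hab => ⟨hf.1 hab, hg.1 hab⟩), ?_, ?_⟩
      · show D.conv (Prod.fst '' ((fun c => (f c, g c)) '' A : Set (D.carrier × E.carrier))) (f a)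
        rw [← Set.image_comp]
        exact hf.2 A a hA
      · show E.conv (Prod.snd '' ((fun c => (f c, g c)) '' A : Set (D.carrier × E.carrier))) (g a)
        rw [← Set.image_comp]
        exact hg.2 A a hA
    · rintro h ⟨_, hfst, hsnd⟩
      funext c
      exact Prod.ext (congrFun hfst c) (congrFun hsnd c)

lemma expo_part (D E : PreDlubpo.{u}) (hD : IsDlubpo D) (sD : S5ax D)
    (hE : IsDlubpo E) (sE : S5ax E) :
    IsDlubpo (expoD D E) ∧ S5ax (expoD D E) ∧
      Hom (prodD (expoD D E) D) E (fun p => p.1.1 p.2) ∧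
      ∀ C : PreDlubpo.{u}, IsDlubpo C → S5ax C →
        ∀ f : (prodD C D).carrier → E.carrier, Hom (prodD C D) E f →
          ∃! h : C.carrier → (expoD D E).carrier,
            Hom C (expoD D E) h ∧ ∀ (c : C.carrier) (d : D.carrier),
              (h c).1 d = f (c, d) := by
  refine ⟨⟨?_, ?_⟩, ?_, ?_, ?_⟩
  · -- natural sets are directed with lub
    rintro F f ⟨hdirF, hconv⟩
    have key : ∀ d : D.carrier,
        IsLUB ((fun p : (expoD D E).carrier × D.carrier => p.1.1 p.2) ''
          (F ×ˢ ({d} : Set D.carrier))) (f.1 d) := by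
      intro d
      have hA : Dir (F ×ˢ ({d} : Set D.carrier)) := hdirF.prod (Dir.singleton d)
      have hc := hconv _ hA (Set.fst_image_prod F ⟨d, rfl⟩) d
        (by show D.conv (@Prod.snd (expoD D E).carrier D.carrier '' (F ×ˢ ({d} : Set D.carrier))) d
            convert hD.2 d using 2; exact Set.snd_image_prod hdirF.1 _)
      exact (hE.1 _ _ hc).2
    refine ⟨hdirF, ?_, ?_⟩
    · intro g hg
      refine expo_le_iff.2 fun d => ?_
      exact (key d).1 ⟨(g, d), ⟨hg, rfl⟩, rfl⟩
    · intro h hh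
      refine expo_le_iff.2 fun d => ?_
      refine (key d).2 ?_
      rintro _ ⟨⟨g, x⟩, ⟨hgF, hx⟩, rfl⟩
      have hx' : x = d := hx
      subst hx'
      exact expo_le_iff.1 (hh hgF) x
  · -- singleton axiom
    intro f
    refine ⟨Dir.singleton f, ?_⟩
    intro A hA hfst d hsnd
    have hone : ∀ p ∈ A, p.1 = f := by
      intro p hp
      have : p.1 ∈ Prod.fst '' A := ⟨p, hp, rfl⟩
      rwa [hfst] at this
    have him : ((fun p => p.1.1 p.2) '' A) = f.1 '' (Prod.snd '' A) := by
      ext b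
      constructor
      · rintro ⟨p, hp, rfl⟩
        refine ⟨p.2, ⟨p, hp, rfl⟩, ?_⟩
        show f.1 p.2 = p.1.1 p.2
        rw [hone p hp]
      · rintro ⟨_, ⟨p, hp, rfl⟩, rfl⟩
        refine ⟨p, hp, ?_⟩
        show p.1.1 p.2 = f.1 p.2
        rw [hone p hp]
    rw [him]
    exact f.2.2 _ _ hsnd
  · -- S5 for the exponent
    rintro X Y g hXY hX hY ⟨hdirY, hYconv⟩ hcof
    refine ⟨hX, ?_⟩
    intro A hA hfst d hsnd
    have hdirS : Dir (Prod.snd '' A) := hA.image _ (fun _ _ hab => hab.2)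
    have hB : Dir (Y ×ˢ (Prod.snd '' A)) := hY.prod hdirS
    have hsnd' : D.conv (Prod.snd '' (Y ×ˢ (Prod.snd '' A))) d := by
      rw [Set.snd_image_prod hY.1]; exact hsnd
    have hBconv : E.conv ((fun p => p.1.1 p.2) '' (Y ×ˢ (Prod.snd '' A))) (g.1 d) :=
      hYconv _ hB (Set.fst_image_prod Y hdirS.1) d hsnd'

    refine sE _ _ _ ?_ (hA.image _ (eval_monotone D E)) (hB.image _ (eval_monotone D E))
      hBconv ?_
    · rintro _ ⟨p, hp, rfl⟩
      exact ⟨p, ⟨hXY (hfst ▸ ⟨p, hp, rfl⟩), ⟨p, hp, rfl⟩⟩, rfl⟩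
    · rintro _ ⟨⟨h, x⟩, ⟨hhY, hxS⟩, rfl⟩
      obtain ⟨h', hh'X, hhh'⟩ := hcof h hhY
      have : h' ∈ Prod.fst '' A := hfst ▸ hh'X
      obtain ⟨q, hq, hq1⟩ := this
      obtain ⟨p, hp, hp2⟩ := hxS
      obtain ⟨r, hr, hpr, hqr⟩ := hA.2 p hp q hq
      have hx2 : p.2 = x := hp2
      refine ⟨r.1.1 r.2, ⟨r, hr, rfl⟩, ?_⟩
      calc h.1 x ≤ h'.1 x := expo_le_iff.1 hhh' x
        _ ≤ r.1.1 x := expo_le_iff.1 (hq1 ▸ hqr.1) x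
        _ ≤ r.1.1 r.2 := r.1.2.1 (hx2 ▸ hpr.2)
  · -- evaluation is continuous
    refine ⟨eval_monotone D E, ?_⟩
    rintro A p ⟨hdirA, h1, h2⟩
    exact h1.2 A hdirA rfl p.2 h2
  · -- currying
    intro C hC sC f hf
    have hcur : ∀ c : C.carrier, Hom D E (fun d => f (c, d)) := by
      intro c
      refine ⟨fun _ _ hdd' => hf.1 ⟨le_refl c, hdd'⟩, ?_⟩
      intro A a hA
      have hdA : Dir A := (hD.1 A a hA).1
      have hBc : (prodD C D).conv (({c} : Set C.carrier) ×ˢ A) (c, a) := by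
        refine ⟨(Dir.singleton c).prod hdA, ?_, ?_⟩
        · rw [Set.fst_image_prod _ hdA.1]; exact hC.2 c
        · rw [Set.snd_image_prod (Set.singleton_nonempty c)]; exact hA
      have hfB := hf.2 _ _ hBc
      have heq : f '' (({c} : Set C.carrier) ×ˢ A) = (fun d => f (c, d)) '' A := by
        ext b
        constructor
        · rintro ⟨⟨c', x⟩, ⟨rfl, hx⟩, rfl⟩
          exact ⟨x, hx, rfl⟩
        · rintro ⟨x, hx, rfl⟩
          exact ⟨(c, x), ⟨rfl, hx⟩, rfl⟩
      rwa [heq] at hfB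
    have hmono : Monotone (fun c => (⟨fun d => f (c, d), hcur c⟩ : (expoD D E).carrier)) :=
      fun _ _ hcc' => expo_le_iff.2 fun d => hf.1 ⟨hcc', le_refl d⟩
    refine ⟨fun c => ⟨fun d => f (c, d), hcur c⟩, ⟨⟨hmono, ?_⟩, fun _ _ => rfl⟩, ?_⟩
    · intro S s hS
      have hdirS : Dir S := (hC.1 S s hS).1
      refine ⟨hdirS.image _ hmono, ?_⟩
      intro A hA hfst d hsnd
      have hdQ : Dir (Prod.snd '' A) := hA.image _ (fun _ _ hab => hab.2)
      have hBc : (prodD C D).conv (S ×ˢ (Prod.snd '' A)) (s, d) :=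
        ⟨hdirS.prod hdQ, by rw [Set.fst_image_prod S hdQ.1]; exact hS,
          by rw [Set.snd_image_prod hdirS.1]; exact hsnd⟩
      have hfB := hf.2 _ _ hBc
      refine sE _ _ _ ?_ (hA.image _ (eval_monotone D E)) ((hBc.1).image _ hf.1) hfB ?_
      · rintro _ ⟨p, hp, rfl⟩
        have hmem : p.1 ∈ Prod.fst '' A := ⟨p, hp, rfl⟩
        rw [hfst] at hmem
        obtain ⟨c, hcS, hcp⟩ := hmem
        refine ⟨(c, p.2), ⟨hcS, ⟨p, hp, rfl⟩⟩, ?_⟩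
        show f (c, p.2) = p.1.1 p.2
        rw [← hcp]
      · rintro _ ⟨⟨c, x⟩, ⟨hcS, hxA⟩, rfl⟩
        have hmem : (⟨fun d => f (c, d), hcur c⟩ : (expoD D E).carrier)
            ∈ Prod.fst '' A := by
          rw [hfst]; exact ⟨c, hcS, rfl⟩
        obtain ⟨q, hq, hq1⟩ := hmem
        obtain ⟨p, hp, hp2⟩ := hxA
        obtain ⟨r, hr, hpr, hqr⟩ := hA.2 p hp q hq
        have hx2 : p.2 = x := hp2
        refine ⟨r.1.1 r.2, ⟨r, hr, rfl⟩, ?_⟩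
        calc f (c, x)
            = q.1.1 x := by rw [hq1]
          _ ≤ r.1.1 x := expo_le_iff.1 hqr.1 x
          _ ≤ r.1.1 r.2 := r.1.2.1 (hx2 ▸ hpr.2)
    · rintro h' ⟨_, heq⟩
      funext c
      exact Subtype.ext (funext fun d => heq c d)



/-- The full subcategory of dlubpos satisfying axiom S5 is cartesian closed:
the one-point dlubpo is terminal, componentwise products are categorical
products, and the general function dlubpos `D ⇒* E` are exponents. -/

theorem stmt8 :
    -- terminal object
    (IsDlubpo termD.{u} ∧ S5ax termD.{u} ∧
      ∀ C : PreDlubpo.{u}, IsDlubpo C → S5ax C →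
        ∃! f : C.carrier → termD.{u}.carrier, Hom C termD f) ∧
    -- binary products
    (∀ D E : PreDlubpo.{u}, IsDlubpo D → S5ax D → IsDlubpo E → S5ax E →
      IsDlubpo (prodD D E) ∧ S5ax (prodD D E) ∧
      Hom (prodD D E) D Prod.fst ∧ Hom (prodD D E) E Prod.snd ∧
      ∀ C : PreDlubpo.{u}, IsDlubpo C → S5ax C →
        ∀ (f : C.carrier → D.carrier) (g : C.carrier → E.carrier),
          Hom C D f → Hom C E g →
          ∃! h : C.carrier → (prodD D E).carrier,
            Hom C (prodD D E) h ∧ Prod.fst ∘ h = f ∧ Prod.snd ∘ h = g) ∧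
    -- exponents
    (∀ D E : PreDlubpo.{u}, IsDlubpo D → S5ax D → IsDlubpo E → S5ax E →
      IsDlubpo (expoD D E) ∧ S5ax (expoD D E) ∧
      Hom (prodD (expoD D E) D) E (fun p => p.1.1 p.2) ∧
      ∀ C : PreDlubpo.{u}, IsDlubpo C → S5ax C →
        ∀ f : (prodD C D).carrier → E.carrier, Hom (prodD C D) E f →
          ∃! h : C.carrier → (expoD D E).carrier,
            Hom C (expoD D E) h ∧ ∀ (c : C.carrier) (d : D.carrier),
              (h c).1 d = f (c, d)) :=
  ⟨term_part, prod_part, expo_part⟩
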